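/- For a map Γ : [0,1]^n → [0,1]^n of the form Γ_i(p) = F(α_i + β^h(Σ_j g_{ij}p_j − 1/2) + (Δβ/2)·g_i Σ(p) g_i'), where Σ(p) = p p' + diag(p∘(1−p)), F is a differentiable CDF with density f bounded by f_max, G = [g_{ij}] is row-stochastic with nonnegative entries, and |β^h| + (3/2)|Δβ| < 1/f_max, the map Γ is a contraction with respect to the sup-norm and therefore has a unique fixed point in [0,1]^n. -/

import Mathlib

/-- The heterogeneous-conformity best-response map `Γ` is a sup-norm
contraction on `[0,1]^n` with constant `fmax * (|βh| + (3/2)|Δβ|)` and has a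
unique fixed point in `[0,1]^n`. -/
theorem stmt_0 {n : ℕ} (hn : 1 ≤ n) (G : Fin n → Fin n → ℝ)
    (hG0 : ∀ i j, 0 ≤ G i j) (hGd : ∀ i, G i i = 0) (hGr : ∀ i, ∑ j, G i j = 1)
    (F f : ℝ → ℝ) (hF : ∀ u, HasDerivAt F (f u) u) (fmax : ℝ)
    (hf0 : ∀ u, 0 ≤ f u) (hfb : ∀ u, f u ≤ fmax)
    (hFcdf : ∀ u, F u ∈ Set.Icc (0 : ℝ) 1)
    (α : Fin n → ℝ) (βh Δβ : ℝ)
    (hβ : |βh| + (3/2) * |Δβ| < 1 / fmax)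
    (Γ : (Fin n → ℝ) → (Fin n → ℝ))
    (hΓ : ∀ p i, Γ p i =
      F (α i + βh * ((∑ j, G i j * p j) - 1/2)
        + (Δβ/2) * ((∑ j, G i j * p j)^2 + ∑ j, (G i j)^2 * p j * (1 - p j)))) :
    (∀ p q : Fin n → ℝ, (∀ j, p j ∈ Set.Icc (0 : ℝ) 1) →
      (∀ j, q j ∈ Set.Icc (0 : ℝ) 1) →
      dist (Γ p) (Γ q) ≤ fmax * (|βh| + (3/2) * |Δβ|) * dist p q)
    ∧ (∃! p : Fin n → ℝ, (∀ j, p j ∈ Set.Icc (0 : ℝ) 1) ∧ Γ p = p) := by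
  have hfmax0 : 0 ≤ fmax := le_trans (hf0 0) (hfb 0)
  have hfmax : 0 < fmax := by
    rcases hfmax0.lt_or_eq with h | h
    · exact h
    · exfalso
      rw [← h] at hβ
      simp only [div_zero] at hβ
      nlinarith [abs_nonneg βh, abs_nonneg Δβ]
  set K : ℝ := fmax * (|βh| + 3/2 * |Δβ|) with hKdef
  have hK0 : 0 ≤ K := by positivity
  have hK1 : K < 1 := by
    have := mul_lt_mul_of_pos_left hβ hfmax
    rwa [mul_one_div, div_self hfmax.ne'] at this
  have lipF : ∀ a b : ℝ, |F a - F b| ≤ fmax * |a - b| := by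
    intro a b
    have := (convex_univ (𝕜 := ℝ) (E := ℝ)).norm_image_sub_le_of_norm_hasDerivWithin_le
      (f := F) (f' := f) (C := fmax)
      (fun x _ => (hF x).hasDerivWithinAt)
      (fun x _ => by rw [Real.norm_eq_abs, abs_of_nonneg (hf0 x)]; exact hfb x)
      (Set.mem_univ b) (Set.mem_univ a)
    simpa [Real.norm_eq_abs] using this
  have key : ∀ p q : Fin n → ℝ, (∀ j, p j ∈ Set.Icc (0:ℝ) 1) →
      (∀ j, q j ∈ Set.Icc (0:ℝ) 1) → ∀ i, |Γ p i - Γ q i| ≤ K * dist p q := by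
    intro p q hp hq i
    set d := dist p q with hd
    have hd0 : 0 ≤ d := dist_nonneg
    have hpq : ∀ j, |p j - q j| ≤ d := fun j => by
      have := dist_le_pi_dist p q j
      simpa [Real.dist_eq] using this
    have hG1 : ∀ j, G i j ≤ 1 := by
      intro j
      calc G i j ≤ ∑ k, G i k :=
            Finset.single_le_sum (fun k _ => hG0 i k) (Finset.mem_univ j)
        _ = 1 := hGr i
    set Sp := ∑ j, G i j * p j with hSp
    set Sq := ∑ j, G i j * q j with hSq
    set Tp := ∑ j, (G i j)^2 * p j * (1 - p j) with hTp
    set Tq := ∑ j, (G i j)^2 * q j * (1 - q j) with hTq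
    have hSp0 : 0 ≤ Sp := Finset.sum_nonneg fun j _ => mul_nonneg (hG0 i j) (hp j).1
    have hSq0 : 0 ≤ Sq := Finset.sum_nonneg fun j _ => mul_nonneg (hG0 i j) (hq j).1
    have hSp1 : Sp ≤ 1 := by
      calc Sp ≤ ∑ j, G i j * 1 :=
            Finset.sum_le_sum fun j _ => mul_le_mul_of_nonneg_left (hp j).2 (hG0 i j)
        _ = 1 := by simp [hGr i]
    have hSq1 : Sq ≤ 1 := by
      calc Sq ≤ ∑ j, G i j * 1 :=
            Finset.sum_le_sum fun j _ => mul_le_mul_of_nonneg_left (hq j).2 (hG0 i j)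
        _ = 1 := by simp [hGr i]
    have hS : |Sp - Sq| ≤ d := by
      rw [hSp, hSq, ← Finset.sum_sub_distrib]
      calc |∑ j, (G i j * p j - G i j * q j)|
          ≤ ∑ j, |G i j * p j - G i j * q j| := Finset.abs_sum_le_sum_abs _ _
        _ ≤ ∑ j, G i j * d := by
            refine Finset.sum_le_sum fun j _ => ?_
            rw [← mul_sub, abs_mul, abs_of_nonneg (hG0 i j)]
            exact mul_le_mul_of_nonneg_left (hpq j) (hG0 i j)
        _ = d := by rw [← Finset.sum_mul, hGr i, one_mul]
    have hS2 : |Sp^2 - Sq^2| ≤ 2 * d := by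
      have heq : Sp^2 - Sq^2 = (Sp + Sq) * (Sp - Sq) := by ring
      rw [heq, abs_mul]
      have h1 : |Sp + Sq| ≤ 2 := by
        rw [abs_of_nonneg (by linarith)]; linarith
      exact mul_le_mul h1 hS (abs_nonneg _) (by norm_num)
    have hT : |Tp - Tq| ≤ d := by
      rw [hTp, hTq, ← Finset.sum_sub_distrib]
      calc |∑ j, ((G i j)^2 * p j * (1 - p j) - (G i j)^2 * q j * (1 - q j))|
          ≤ ∑ j, |(G i j)^2 * p j * (1 - p j) - (G i j)^2 * q j * (1 - q j)| :=
            Finset.abs_sum_le_sum_abs _ _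
        _ ≤ ∑ j, G i j * d := by
            refine Finset.sum_le_sum fun j _ => ?_
            have heq : (G i j)^2 * p j * (1 - p j) - (G i j)^2 * q j * (1 - q j)
                = (G i j)^2 * ((p j - q j) * (1 - p j - q j)) := by ring
            rw [heq, abs_mul, abs_mul]
            have h1 : |(G i j)^2| ≤ G i j := by
              rw [abs_of_nonneg (by positivity)]
              nlinarith [hG0 i j, hG1 j]
            have h2 : |1 - p j - q j| ≤ 1 := by
              rw [abs_le]
              constructor <;> [nlinarith [(hp j).2, (hq j).2]; nlinarith [(hp j).1, (hq j).1]]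
            have h3 : |p j - q j| * |1 - p j - q j| ≤ d :=
              le_trans (mul_le_mul_of_nonneg_left h2 (abs_nonneg _))
                (by simpa using hpq j)
            exact mul_le_mul h1 h3 (by positivity) (hG0 i j)
        _ = d := by rw [← Finset.sum_mul, hGr i, one_mul]
    rw [hΓ p i, hΓ q i]
    set up := α i + βh * (Sp - 1/2) + (Δβ/2) * (Sp^2 + Tp) with hup
    set uq := α i + βh * (Sq - 1/2) + (Δβ/2) * (Sq^2 + Tq) with huq
    have hu : |up - uq| ≤ (|βh| + 3/2 * |Δβ|) * d := by
      have heq : up - uq = βh * (Sp - Sq) + (Δβ/2) * ((Sp^2 - Sq^2) + (Tp - Tq)) := by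
        rw [hup, huq]; ring
      rw [heq]
      have h1 := abs_add_le (βh * (Sp - Sq)) ((Δβ/2) * ((Sp^2 - Sq^2) + (Tp - Tq)))
      have h2 := abs_add_le (Sp^2 - Sq^2) (Tp - Tq)
      rw [abs_mul, abs_mul] at h1
      have h3 : |Δβ/2| = |Δβ| / 2 := by rw [abs_div]; norm_num
      rw [h3] at h1
      have b1 : |βh| * |Sp - Sq| ≤ |βh| * d :=
        mul_le_mul_of_nonneg_left hS (abs_nonneg _)
      have b2 : |Δβ| / 2 * |Sp ^ 2 - Sq ^ 2 + (Tp - Tq)| ≤ |Δβ| / 2 * (3 * d) :=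
        mul_le_mul_of_nonneg_left (by linarith) (by positivity)
      linarith
    calc |F up - F uq| ≤ fmax * |up - uq| := lipF _ _
      _ ≤ fmax * ((|βh| + 3/2 * |Δβ|) * d) := mul_le_mul_of_nonneg_left hu hfmax0
      _ = K * d := by rw [hKdef]; ring
  have part1 : ∀ p q : Fin n → ℝ, (∀ j, p j ∈ Set.Icc (0:ℝ) 1) →
      (∀ j, q j ∈ Set.Icc (0:ℝ) 1) →
      dist (Γ p) (Γ q) ≤ fmax * (|βh| + (3/2) * |Δβ|) * dist p q := by
    intro p q hp hq
    rw [dist_pi_le_iff (by positivity)]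
    intro i
    rw [Real.dist_eq]
    exact key p q hp hq i
  refine ⟨part1, ?_⟩
  -- existence via Banach on the closed box
  set S : Set (Fin n → ℝ) := Set.univ.pi (fun _ => Set.Icc (0:ℝ) 1) with hSdef
  have hSmem : ∀ p : Fin n → ℝ, p ∈ S ↔ ∀ j, p j ∈ Set.Icc (0:ℝ) 1 := by
    intro p; rw [hSdef, Set.mem_univ_pi]
  have hSclosed : IsClosed S := isClosed_set_pi (fun i _ => isClosed_Icc)
  haveI : CompleteSpace S := hSclosed.completeSpace_coe
  haveI : Nonempty S := ⟨⟨fun _ => 0, (hSmem _).2 (fun j => by norm_num)⟩⟩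
  set Γ' : S → S := fun x => ⟨Γ x.val, (hSmem _).2 (fun j => by rw [hΓ]; exact hFcdf _)⟩
    with hΓ'
  have hcontr : ContractingWith ⟨K, hK0⟩ Γ' := by
    constructor
    · exact_mod_cast hK1
    · refine LipschitzWith.of_dist_le_mul (fun x y => ?_)
      have := part1 x.val y.val ((hSmem _).1 x.2) ((hSmem _).1 y.2)
      exact (by simpa [hΓ', Subtype.dist_eq, hKdef] using this : dist (Γ' x) (Γ' y) ≤ K * dist x y)
  obtain ⟨x, hxfix', -⟩ := hcontr.exists_fixedPoint (Classical.arbitrary S)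
    (edist_ne_top _ _)
  have hxfix : Γ x.val = x.val := congrArg Subtype.val hxfix'
  refine ⟨x.val, ⟨(hSmem _).1 x.2, hxfix⟩, ?_⟩
  rintro q ⟨hq, hqfix⟩
  have hd := part1 q x.val hq ((hSmem _).1 x.2)
  rw [hqfix, hxfix] at hd
  have : dist q x.val ≤ 0 := by nlinarith [dist_nonneg (x := q) (y := x.val)]
  exact dist_le_zero.1 this
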